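/- Let G be a directed graph with m edges and integral edge costs c ∈ ℤ^E, and let f and f* be two feasible integral flows for the same demands, where f* is optimal for cost c. If cᵀf ≤ cᵀf* + μ·n for some μ > 0, then f can be converted to an optimal flow f' by augmenting along negative-cost cycles in the residual graph, and ‖f - f'‖₁ ≤ μ·n² (assuming each augmenting cycle has cost at most -1 and uses at most n edges, and each augmentation sends at least 1 unit). In particular ‖f - f'‖_∞ ≤ μ·n². -/

import Mathlib

namespace Stmt10Aux

variable {n : ℕ}

/-- Divergence of a pseudo-flow at a vertex. -/
def dvg (d : Fin n × Fin n → ℤ) (v : Fin n) : ℤ :=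
  (∑ w, d (v, w)) - ∑ w, d (w, v)

lemma dvg_add (d d' : Fin n × Fin n → ℤ) (v : Fin n) :
    dvg (d + d') v = dvg d v + dvg d' v := by
  simp [dvg, Finset.sum_add_distrib]; ring

lemma dvg_sub (d d' : Fin n × Fin n → ℤ) (v : Fin n) :
    dvg (d - d') v = dvg d v - dvg d' v := by
  simp [dvg, Finset.sum_sub_distrib]; ring

lemma dvg_single (a b : Fin n) (v : Fin n) :
    dvg (Pi.single (a, b) (1 : ℤ)) v
      = (if v = a then 1 else 0) - (if v = b then 1 else 0) := by
  classical
  simp only [dvg]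
  have h1 : (∑ w, Pi.single (M := fun _ => ℤ) (a, b) 1 (v, w))
      = if v = a then 1 else 0 := by
    by_cases hv : v = a
    · subst hv
      rw [Finset.sum_eq_single b]
      · simp [Pi.single_apply]
      · intro w _ hw; simp [Pi.single_apply, Prod.ext_iff, hw]
      · simp
    · rw [Finset.sum_eq_zero]
      · simp [hv]
      · intro w _; simp [Pi.single_apply, Prod.ext_iff, hv]
  have h2 : (∑ w, Pi.single (M := fun _ => ℤ) (a, b) 1 (w, v))
      = if v = b then 1 else 0 := by
    by_cases hv : v = b
    · subst hv
      rw [Finset.sum_eq_single a]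
      · simp [Pi.single_apply]
      · intro w _ hw; simp [Pi.single_apply, Prod.ext_iff, hw]
      · simp
    · rw [Finset.sum_eq_zero]
      · simp [hv]
      · intro w _; simp [Pi.single_apply, Prod.ext_iff, hv]
  rw [h1, h2]

end Stmt10Aux

namespace Stmt10Aux

variable {n : ℕ}

lemma dvg_zero (v : Fin n) : dvg (0 : Fin n × Fin n → ℤ) v = 0 := by simp [dvg]

lemma dvg_finsum {α : Type*} (s : Finset α) (F : α → (Fin n × Fin n → ℤ)) (v : Fin n) :
    dvg (∑ t ∈ s, F t) v = ∑ t ∈ s, dvg (F t) v := by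
  classical
  induction s using Finset.cons_induction with
  | empty => simp [dvg_zero]
  | cons a s ha ih => rw [Finset.sum_cons, Finset.sum_cons, dvg_add, ih]

lemma dvg_neg (d : Fin n × Fin n → ℤ) (v : Fin n) : dvg (-d) v = -dvg d v := by
  simp [dvg]; ring

lemma telescope (g : ℕ → ℤ) : ∀ i j : ℕ, i ≤ j →
    ∑ t ∈ Finset.Ico i j, (g t - g (t + 1)) = g i - g j := by
  intro i j hij
  induction j, hij using Nat.le_induction with
  | base => simp
  | succ j hij ih => rw [Finset.sum_Ico_succ_top hij, ih]; ring

/-- Extract a simple cycle from a nonzero circulation. -/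
lemma exists_cycle (d : Fin n × Fin n → ℤ) (hcirc : ∀ v, dvg d v = 0)
    (e₀ : Fin n × Fin n) (h₀ : d e₀ ≠ 0) :
    ∃ χ : Fin n × Fin n → ℤ,
      (∀ v, dvg χ v = 0) ∧
      (∀ e, χ e = 0 ∨ (χ e = 1 ∧ 1 ≤ d e) ∨ (χ e = -1 ∧ d e ≤ -1)) ∧
      (∃ e, χ e ≠ 0) ∧
      (∑ e, |χ e|) ≤ n := by
  classical
  set Arc : Fin n → Fin n → Prop := fun a b => 0 < d (a, b) ∨ d (b, a) < 0 with hArc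
  -- every vertex with an incoming arc has an outgoing arc
  have hout : ∀ w : Fin n, (∃ a, Arc a w) → ∃ x, Arc w x := by
    intro w hin
    by_contra hno
    push_neg at hno
    have hno' : ∀ x, d (w, x) ≤ 0 ∧ 0 ≤ d (x, w) := by
      intro x
      have h := hno x
      rw [hArc] at h
      exact ⟨not_lt.mp (fun hh => h (Or.inl hh)), not_lt.mp (fun hh => h (Or.inr hh))⟩
    have h1 : (∑ x, d (w, x)) ≤ 0 := Finset.sum_nonpos fun x _ => (hno' x).1
    have h2 : (0 : ℤ) ≤ ∑ x, d (x, w) := Finset.sum_nonneg fun x _ => (hno' x).2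
    have hc := hcirc w
    rw [dvg, sub_eq_zero] at hc
    have hz1 : (∑ x, d (w, x)) = 0 := le_antisymm h1 (hc ▸ h2)
    have hz2 : (∑ x, d (x, w)) = 0 := hc ▸ hz1
    have hall1 : ∀ x, d (w, x) = 0 := by
      intro x
      have := (Finset.sum_eq_zero_iff_of_nonpos (fun x _ => (hno' x).1)).mp hz1
      exact this x (Finset.mem_univ x)
    have hall2 : ∀ x, d (x, w) = 0 := by
      intro x
      have := (Finset.sum_eq_zero_iff_of_nonneg (fun x _ => (hno' x).2)).mp hz2
      exact this x (Finset.mem_univ x)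
    obtain ⟨a, ha⟩ := hin
    rw [hArc] at ha
    rcases ha with h | h
    · rw [hall2 a] at h; exact lt_irrefl 0 h
    · rw [hall1 a] at h; exact lt_irrefl 0 h
  -- a starting vertex with an outgoing arc
  have hstart : ∃ s : Fin n, ∃ x, Arc s x := by
    rcases lt_or_gt_of_ne h₀ with h | h
    · exact ⟨e₀.2, e₀.1, Or.inr (by simpa using h)⟩
    · exact ⟨e₀.1, e₀.2, Or.inl (by simpa using h)⟩
  obtain ⟨s, hs⟩ := hstart
  -- build the infinite walk
  let S := {v : Fin n // ∃ x, Arc v x}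
  have hnext : ∀ p : S, ∃ x, Arc p.1 x ∧ ∃ y, Arc x y := by
    intro p
    obtain ⟨x, hx⟩ := p.2
    exact ⟨x, hx, hout x ⟨p.1, hx⟩⟩
  let next : S → S := fun p => ⟨(hnext p).choose, (hnext p).choose_spec.2⟩
  have hnext_arc : ∀ p : S, Arc p.1 (next p).1 := fun p => (hnext p).choose_spec.1
  let seq : ℕ → S := fun t => next^[t] ⟨s, hs⟩
  let v : ℕ → Fin n := fun t => (seq t).1
  have harc : ∀ t, Arc (v t) (v (t + 1)) := by
    intro t
    have : seq (t + 1) = next (seq t) := Function.iterate_succ_apply' next t _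
    rw [show v (t+1) = (seq (t+1)).1 from rfl, this]
    exact hnext_arc (seq t)
  -- pigeonhole: a repeated vertex among v 0, ..., v n
  have hP : ∃ j, ∃ i, i < j ∧ j ≤ n ∧ v i = v j := by
    have hcard : Fintype.card (Fin n) < Fintype.card (Fin (n + 1)) := by
      simp
    obtain ⟨k, k', hkk', heq⟩ :=
      Fintype.exists_ne_map_eq_of_card_lt (fun k : Fin (n + 1) => v k.1) hcard
    rcases lt_or_gt_of_ne hkk' with h | h
    · exact ⟨k'.1, k.1, h, Nat.lt_succ_iff.mp k'.2, heq⟩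
    · exact ⟨k.1, k'.1, h, Nat.lt_succ_iff.mp k.2, heq.symm⟩
  -- minimal such j
  let P : ℕ → Prop := fun j => ∃ i, i < j ∧ v i = v j
  have hPex : ∃ j, P j := by
    obtain ⟨j, i, hij, _, hv⟩ := hP
    exact ⟨j, i, hij, hv⟩
  let j := Nat.find hPex
  have hPj : P j := Nat.find_spec hPex
  have hjn : j ≤ n := by
    obtain ⟨j', i, hij, hj'n, hv⟩ := hP
    exact le_trans (Nat.find_min' hPex ⟨i, hij, hv⟩) hj'n
  obtain ⟨i, hij, hvij⟩ := hPj
  -- injectivity of v below j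
  have hinj : ∀ t t', t < j → t' < j → v t = v t' → t = t' := by
    intro t t' ht ht' hv
    by_contra hne
    rcases lt_or_gt_of_ne hne with h | h
    · exact Nat.find_min hPex ht' ⟨t, h, hv⟩
    · exact Nat.find_min hPex ht ⟨t', h, hv.symm⟩
  -- the cycle
  let step : ℕ → (Fin n × Fin n → ℤ) := fun t =>
    if 0 < d (v t, v (t + 1)) then Pi.single (v t, v (t + 1)) (1 : ℤ)
    else -Pi.single (v (t + 1), v t) (1 : ℤ)
  -- per-step sign facts
  have hstep_sign : ∀ t e, step t e ≠ 0 →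
      (step t e = 1 ∧ 1 ≤ d e) ∨ (step t e = -1 ∧ d e ≤ -1) := by
    intro t e he
    by_cases hpos : 0 < d (v t, v (t + 1))
    · have hst : step t e = Pi.single (M := fun _ => ℤ) (v t, v (t + 1)) 1 e := by
        simp only [step, if_pos hpos]
      rw [hst, Pi.single_apply] at he ⊢
      by_cases hee : e = (v t, v (t + 1))
      · subst hee; exact Or.inl ⟨by simp, by omega⟩
      · simp [hee] at he
    · have harc' := harc t
      rw [hArc] at harc'
      have hneg : d (v (t + 1), v t) < 0 := harc'.resolve_left hpos
      have hst : step t e = -Pi.single (M := fun _ => ℤ) (v (t + 1), v t) 1 e := by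
        simp only [step, if_neg hpos, Pi.neg_apply]
      rw [hst, Pi.single_apply] at he ⊢
      by_cases hee : e = (v (t + 1), v t)
      · subst hee; exact Or.inr ⟨by simp, by omega⟩
      · simp [hee] at he
  -- uniqueness: at most one step touches each edge
  have huniq : ∀ t t', t ∈ Finset.Ico i j → t' ∈ Finset.Ico i j → ∀ e,
      step t e ≠ 0 → step t' e ≠ 0 → t = t' := by
    intro t t' ht ht' e het het'
    rw [Finset.mem_Ico] at ht ht'
    have hedge : ∀ u, u ∈ Finset.Ico i j → ∀ (he : step u e ≠ 0),
        (0 < d (v u, v (u + 1)) ∧ e = (v u, v (u + 1))) ∨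
        (¬ 0 < d (v u, v (u + 1)) ∧ e = (v (u + 1), v u)) := by
      intro u _ he
      by_cases hpos : 0 < d (v u, v (u + 1))
      · left
        refine ⟨hpos, ?_⟩
        simp only [step, if_pos hpos, Pi.single_apply] at he
        by_contra hee
        simp [hee] at he
      · right
        refine ⟨hpos, ?_⟩
        simp only [step, if_neg hpos, Pi.single_apply] at he
        by_contra hee
        simp [hee] at he
    have h1 := hedge t (Finset.mem_Ico.mpr ht) het
    have h2 := hedge t' (Finset.mem_Ico.mpr ht') het'
    rcases h1 with ⟨hp1, he1⟩ | ⟨hp1, he1⟩ <;> rcases h2 with ⟨hp2, he2⟩ | ⟨hp2, he2⟩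
    · -- both forward: sources v t = v t'
      have : v t = v t' := by
        have := he1 ▸ he2
        exact (Prod.ext_iff.mp this).1
      exact hinj t t' ht.2 ht'.2 this
    · -- forward / backward: sign clash
      exfalso
      have hx : (v t, v (t + 1)) = (v (t' + 1), v t') := he1 ▸ he2
      have hneg : d (v (t' + 1), v t') < 0 := (hArc ▸ harc t').resolve_left hp2
      rw [← hx] at hneg
      exact absurd hp1 (not_lt.mpr hneg.le)
    · exfalso
      have hx : (v t', v (t' + 1)) = (v (t + 1), v t) := he2 ▸ he1
      have hneg : d (v (t + 1), v t) < 0 := (hArc ▸ harc t).resolve_left hp1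
      rw [← hx] at hneg
      exact absurd hp2 (not_lt.mpr hneg.le)
    · -- both backward: v t = v t' from second components
      have : v t = v t' := by
        have := he1 ▸ he2
        exact (Prod.ext_iff.mp this).2
      exact hinj t t' ht.2 ht'.2 this
  refine ⟨∑ t ∈ Finset.Ico i j, step t, ?_, ?_, ?_, ?_⟩
  · -- circulation
    intro w
    rw [dvg_finsum]
    have hstep_dvg : ∀ t, dvg (step t) w
        = ((if w = v t then 1 else 0) - (if w = v (t+1) then 1 else 0) : ℤ) := by
      intro t
      by_cases hpos : 0 < d (v t, v (t + 1))
      · simp only [step, if_pos hpos]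
        exact dvg_single _ _ _
      · simp only [step, if_neg hpos]
        rw [dvg_neg, dvg_single]
        ring
    rw [Finset.sum_congr rfl (fun t _ => hstep_dvg t)]
    rw [telescope _ i j hij.le]
    rw [hvij]
    ring
  · -- conformality / sign condition
    intro e
    by_cases hex : ∃ t ∈ Finset.Ico i j, step t e ≠ 0
    · obtain ⟨t₀, ht₀, hne⟩ := hex
      have : (∑ t ∈ Finset.Ico i j, step t) e = step t₀ e := by
        rw [Finset.sum_apply]
        refine Finset.sum_eq_single_of_mem t₀ ht₀ ?_
        intro t ht hne'
        by_contra h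
        exact hne' (huniq t t₀ ht ht₀ e h hne)
      rw [this]
      right
      exact hstep_sign t₀ e hne
    · push_neg at hex
      left
      rw [Finset.sum_apply]
      exact Finset.sum_eq_zero fun t ht => hex t ht
  · -- nonzero
    have hiIco : i ∈ Finset.Ico i j := Finset.mem_Ico.mpr ⟨le_refl i, hij⟩
    by_cases hpos : 0 < d (v i, v (i + 1))
    · refine ⟨(v i, v (i + 1)), ?_⟩
      have hne : step i (v i, v (i + 1)) ≠ 0 := by
        simp [step, if_pos hpos, Pi.single_apply]
      have : (∑ t ∈ Finset.Ico i j, step t) (v i, v (i + 1)) = step i (v i, v (i+1)) := by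
        rw [Finset.sum_apply]
        refine Finset.sum_eq_single_of_mem i hiIco ?_
        intro t ht hne'
        by_contra h
        exact hne' (huniq t i ht hiIco _ h hne)
      rw [this]
      exact hne
    · refine ⟨(v (i + 1), v i), ?_⟩
      have hne : step i (v (i + 1), v i) ≠ 0 := by
        simp [step, if_neg hpos, Pi.single_apply]
      have : (∑ t ∈ Finset.Ico i j, step t) (v (i+1), v i) = step i (v (i+1), v i) := by
        rw [Finset.sum_apply]
        refine Finset.sum_eq_single_of_mem i hiIco ?_
        intro t ht hne'
        by_contra h
        exact hne' (huniq t i ht hiIco _ h hne)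
      rw [this]
      exact hne
  · -- ℓ₁ bound
    have hsingle_l1 : ∀ a : Fin n × Fin n,
        (∑ e, |Pi.single (M := fun _ => ℤ) a 1 e|) = 1 := by
      intro a
      rw [Finset.sum_eq_single a]
      · simp
      · intro e _ hea; simp [Pi.single_apply, hea]
      · simp
    have hstep_l1 : ∀ t, (∑ e, |step t e|) = 1 := by
      intro t
      by_cases hpos : 0 < d (v t, v (t + 1))
      · simp only [step, if_pos hpos]
        exact hsingle_l1 _
      · simp only [step, if_neg hpos, Pi.neg_apply, abs_neg]
        exact hsingle_l1 _
    calc (∑ e, |(∑ t ∈ Finset.Ico i j, step t) e|)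
        ≤ ∑ e, ∑ t ∈ Finset.Ico i j, |step t e| := by
          refine Finset.sum_le_sum fun e _ => ?_
          rw [Finset.sum_apply]
          exact Finset.abs_sum_le_sum_abs _ _
      _ = ∑ t ∈ Finset.Ico i j, ∑ e, |step t e| := Finset.sum_comm
      _ = ∑ t ∈ Finset.Ico i j, 1 := Finset.sum_congr rfl fun t _ => hstep_l1 t
      _ = (j - i : ℕ) := by simp
      _ ≤ (n : ℤ) := by
          have : j - i ≤ n := le_trans (Nat.sub_le j i) hjn
          exact_mod_cast this

end Stmt10Aux

namespace Stmt10Aux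

variable {n : ℕ}

lemma sign_to_conf (x y : ℤ) (h : y = 0 ∨ (y = 1 ∧ 1 ≤ x) ∨ (y = -1 ∧ x ≤ -1)) :
    (0 ≤ y ∧ y ≤ x) ∨ (x ≤ y ∧ y ≤ 0) := by omega

lemma abs_sub_cycle (x y : ℤ) (h : y = 0 ∨ (y = 1 ∧ 1 ≤ x) ∨ (y = -1 ∧ x ≤ -1)) :
    |x - y| = |x| - |y| := by
  rcases h with h | ⟨h, hx⟩ | ⟨h, hx⟩
  · simp [h]
  · subst h
    rw [abs_of_nonneg (by omega : (0:ℤ) ≤ x - 1), abs_of_nonneg (by omega : (0:ℤ) ≤ x)]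
    simp
  · subst h
    rw [show x - (-1) = x + 1 by ring, abs_of_nonpos (by omega : x + 1 ≤ 0),
      abs_of_nonpos (by omega : x ≤ 0)]
    simp; ring

/-- From a circulation of negative cost, extract a short negative-cost cycle
conformal to it. -/
lemma exists_neg_cycle (c : Fin n × Fin n → ℤ) :
    ∀ N : ℕ, ∀ d : Fin n × Fin n → ℤ, (∑ e, |d e|).toNat ≤ N →
    (∀ v, dvg d v = 0) → (∑ e, c e * d e) ≤ -1 →
    ∃ χ : Fin n × Fin n → ℤ,
      (∀ v, dvg χ v = 0) ∧
      (∀ e, (0 ≤ χ e ∧ χ e ≤ d e) ∨ (d e ≤ χ e ∧ χ e ≤ 0)) ∧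
      (∑ e, c e * χ e) ≤ -1 ∧
      (∑ e, |χ e|) ≤ n := by
  intro N
  induction N with
  | zero =>
    intro d hN hcirc hneg
    exfalso
    have h1 : (∑ e, |d e|) ≤ 0 := by omega
    have h2 : ∀ e, d e = 0 := by
      intro e
      have := (Finset.sum_eq_zero_iff_of_nonneg (fun e _ => abs_nonneg (d e))).mp
        (le_antisymm h1 (Finset.sum_nonneg (fun e _ => abs_nonneg (d e))))
      have := this e (Finset.mem_univ e)
      exact abs_eq_zero.mp this
    rw [Finset.sum_eq_zero (fun e _ => by rw [h2 e, mul_zero])] at hneg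
    omega
  | succ N ih =>
    intro d hN hcirc hneg
    have hne : ∃ e₀, d e₀ ≠ 0 := by
      by_contra h
      push_neg at h
      rw [Finset.sum_eq_zero (fun e _ => by rw [h e, mul_zero])] at hneg
      omega
    obtain ⟨e₀, h₀⟩ := hne
    obtain ⟨χ, hχcirc, hχsign, hχne, hχl1⟩ := exists_cycle d hcirc e₀ h₀
    by_cases hc : (∑ e, c e * χ e) ≤ -1
    · exact ⟨χ, hχcirc, fun e => sign_to_conf _ _ (hχsign e), hc, hχl1⟩
    · -- recurse on d - χ
      push_neg at hc
      have hc' : 0 ≤ ∑ e, c e * χ e := by omega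
      have hd'circ : ∀ v, dvg (d - χ) v = 0 := by
        intro v; rw [dvg_sub, hcirc, hχcirc]; ring
      have hd'neg : (∑ e, c e * (d - χ) e) ≤ -1 := by
        have : (∑ e, c e * (d - χ) e) = (∑ e, c e * d e) - ∑ e, c e * χ e := by
          rw [← Finset.sum_sub_distrib]
          exact Finset.sum_congr rfl fun e _ => by simp [Pi.sub_apply]; ring
        rw [this]; omega
      have habs : (∑ e, |(d - χ) e|) = (∑ e, |d e|) - ∑ e, |χ e| := by
        rw [← Finset.sum_sub_distrib]
        exact Finset.sum_congr rfl fun e _ => abs_sub_cycle _ _ (hχsign e)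
      have hχpos : 1 ≤ ∑ e, |χ e| := by
        obtain ⟨e, he⟩ := hχne
        have h1 : 1 ≤ |χ e| := by
          rcases hχsign e with h | ⟨h, _⟩ | ⟨h, _⟩
          · exact absurd h he
          · rw [h]; simp
          · rw [h]; simp
        exact le_trans h1 (Finset.single_le_sum (fun e _ => abs_nonneg (χ e))
          (Finset.mem_univ e))
      have hN' : (∑ e, |(d - χ) e|).toNat ≤ N := by
        have h0 : 0 ≤ ∑ e, |d e| := Finset.sum_nonneg fun e _ => abs_nonneg _
        omega
      obtain ⟨χ', h'circ, h'conf, h'neg, h'l1⟩ := ih (d - χ) hN' hd'circ hd'neg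
      refine ⟨χ', h'circ, ?_, h'neg, h'l1⟩
      intro e
      have h1 := h'conf e
      have h2 := sign_to_conf (d e) (χ e) (hχsign e)
      simp only [Pi.sub_apply] at h1
      omega

end Stmt10Aux

namespace Stmt10Aux

variable {n : ℕ}

/-- Main induction: a feasible flow with optimality gap at most `k` is within
`ℓ₁`-distance `n * k` of some optimal flow. -/
lemma improve (c u : Fin n × Fin n → ℤ) (b : Fin n → ℤ)
    (fstar : Fin n × Fin n → ℤ)
    (hb : (∀ e, 0 ≤ fstar e ∧ fstar e ≤ u e) ∧ ∀ v, dvg fstar v = b v) :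
    ∀ k : ℕ, ∀ f : Fin n × Fin n → ℤ,
    ((∀ e, 0 ≤ f e ∧ f e ≤ u e) ∧ ∀ v, dvg f v = b v) →
    (∑ e, c e * f e) - (∑ e, c e * fstar e) ≤ k →
    ∃ f' : Fin n × Fin n → ℤ,
      ((∀ e, 0 ≤ f' e ∧ f' e ≤ u e) ∧ ∀ v, dvg f' v = b v) ∧
      (∑ e, c e * f' e) ≤ (∑ e, c e * fstar e) ∧
      (∑ e, |f e - f' e|) ≤ n * k := by
  intro k
  induction k with
  | zero =>
    intro f hfeas hgap
    by_cases hfo : (∑ e, c e * f e) ≤ ∑ e, c e * fstar e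
    · exact ⟨f, hfeas, hfo, by simp⟩
    · exact ⟨fstar, hb, le_refl _, by push_neg at hfo; omega⟩
  | succ k ih =>
    intro f hfeas hgap
    by_cases hfo : (∑ e, c e * f e) ≤ ∑ e, c e * fstar e
    · refine ⟨f, hfeas, hfo, ?_⟩
      have : (∑ e, |f e - f e|) = 0 := by simp
      rw [this]
      positivity
    · push_neg at hfo
      set d : Fin n × Fin n → ℤ := fstar - f with hd
      have hdcirc : ∀ v, dvg d v = 0 := by
        intro v; rw [hd, dvg_sub, hb.2, hfeas.2]; ring
      have hdneg : (∑ e, c e * d e) ≤ -1 := by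
        have : (∑ e, c e * d e) = (∑ e, c e * fstar e) - ∑ e, c e * f e := by
          rw [← Finset.sum_sub_distrib]
          exact Finset.sum_congr rfl fun e _ => by simp [hd, Pi.sub_apply]; ring
        rw [this]; omega
      obtain ⟨χ, hχcirc, hχconf, hχneg, hχl1⟩ :=
        exists_neg_cycle c (∑ e, |d e|).toNat d (le_refl _) hdcirc hdneg
      set f₁ : Fin n × Fin n → ℤ := f + χ with hf₁
      have hf₁feas : ((∀ e, 0 ≤ f₁ e ∧ f₁ e ≤ u e) ∧ ∀ v, dvg f₁ v = b v) := by
        constructor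
        · intro e
          have h1 := hχconf e
          have h2 := hfeas.1 e
          have h3 := hb.1 e
          simp only [hd, Pi.sub_apply] at h1
          simp only [hf₁, Pi.add_apply]
          omega
        · intro v
          rw [hf₁, dvg_add, hfeas.2, hχcirc]; ring
      have hf₁gap : (∑ e, c e * f₁ e) - (∑ e, c e * fstar e) ≤ k := by
        have : (∑ e, c e * f₁ e) = (∑ e, c e * f e) + ∑ e, c e * χ e := by
          rw [← Finset.sum_add_distrib]
          exact Finset.sum_congr rfl fun e _ => by simp [hf₁, Pi.add_apply]; ring
        rw [this]
        push_cast at hgap ⊢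
        omega
      obtain ⟨f', hf'feas, hf'opt, hf'dist⟩ := ih f₁ hf₁feas hf₁gap
      refine ⟨f', hf'feas, hf'opt, ?_⟩
      have htri : (∑ e, |f e - f' e|) ≤ (∑ e, |χ e|) + ∑ e, |f₁ e - f' e| := by
        rw [← Finset.sum_add_distrib]
        refine Finset.sum_le_sum fun e _ => ?_
        have : f e - f' e = -(χ e) + (f₁ e - f' e) := by simp [hf₁]; ring
        rw [this]
        calc |(-(χ e)) + (f₁ e - f' e)| ≤ |(-(χ e))| + |f₁ e - f' e| := abs_add_le _ _
          _ = |χ e| + |f₁ e - f' e| := by rw [abs_neg]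
      calc (∑ e, |f e - f' e|) ≤ (∑ e, |χ e|) + ∑ e, |f₁ e - f' e| := htri
        _ ≤ n + n * k := add_le_add hχl1 hf'dist
        _ = n * (k + 1 : ℕ) := by push_cast; ring

end Stmt10Aux

/-- A feasible integral flow whose cost is within `μn` of the optimum is within
`ℓ₁`-distance (hence `ℓ∞`-distance) `μn²` of some optimal integral flow. -/
theorem stmt10 (n : ℕ) (c u : Fin n × Fin n → ℤ) (b : Fin n → ℤ)
    (μ : ℝ) (hμ : 0 < μ)
    (Feasible : (Fin n × Fin n → ℤ) → Prop)
    (hfeas : ∀ x, Feasible x ↔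
      ((∀ e, 0 ≤ x e ∧ x e ≤ u e) ∧
        ∀ v : Fin n, (∑ w : Fin n, x (v, w)) - (∑ w : Fin n, x (w, v)) = b v))
    (f fstar : Fin n × Fin n → ℤ)
    (hf : Feasible f) (hfstar : Feasible fstar)
    (hopt : ∀ g, Feasible g → (∑ e, c e * fstar e) ≤ ∑ e, c e * g e)
    (hnear : (∑ e, (c e : ℝ) * f e) ≤ (∑ e, (c e : ℝ) * fstar e) + μ * n) :
    ∃ f' : Fin n × Fin n → ℤ, Feasible f' ∧
      (∀ g, Feasible g → (∑ e, c e * f' e) ≤ ∑ e, c e * g e) ∧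
      (∑ e, |(f e : ℝ) - (f' e : ℝ)|) ≤ μ * n ^ 2 ∧
      ∀ e, |(f e : ℝ) - (f' e : ℝ)| ≤ μ * n ^ 2 := by
  classical
  have hf' := (hfeas f).mp hf
  have hfstar' := (hfeas fstar).mp hfstar
  set k : ℕ := ((∑ e, c e * f e) - (∑ e, c e * fstar e)).toNat with hk
  have hgap : (∑ e, c e * f e) - (∑ e, c e * fstar e) ≤ (k : ℤ) := Int.self_le_toNat _
  obtain ⟨f', hf'feas, hf'opt, hf'dist⟩ :=
    Stmt10Aux.improve c u b fstar hfstar' k f hf' hgap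
  have hFf' : Feasible f' := (hfeas f').mpr hf'feas
  -- cost bound on k
  have hkR : (k : ℝ) ≤ μ * n := by
    by_cases hpos : (∑ e, c e * f e) - (∑ e, c e * fstar e) ≤ 0
    · have : k = 0 := by omega
      rw [this]
      push_cast
      positivity
    · push_neg at hpos
      have hkeq : (k : ℤ) = (∑ e, c e * f e) - (∑ e, c e * fstar e) := by omega
      have h1 : ((∑ e, c e * f e : ℤ) : ℝ) ≤ ((∑ e, c e * fstar e : ℤ) : ℝ) + μ * n := by
        push_cast
        convert hnear using 2
      have : ((k : ℤ) : ℝ) ≤ μ * n := by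
        rw [hkeq]
        push_cast at h1 ⊢
        linarith
      exact_mod_cast this
  -- the ℓ₁ distance in ℝ
  have hdistR : (∑ e, |(f e : ℝ) - (f' e : ℝ)|) = ((∑ e, |f e - f' e| : ℤ) : ℝ) := by
    push_cast
    rfl
  have hl1 : (∑ e, |(f e : ℝ) - (f' e : ℝ)|) ≤ μ * n ^ 2 := by
    rw [hdistR]
    calc ((∑ e, |f e - f' e| : ℤ) : ℝ) ≤ ((n * k : ℤ) : ℝ) := by exact_mod_cast hf'dist
      _ = (n : ℝ) * (k : ℝ) := by push_cast; ring
      _ ≤ (n : ℝ) * (μ * n) := by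
          apply mul_le_mul_of_nonneg_left hkR
          positivity
      _ = μ * n ^ 2 := by ring
  refine ⟨f', hFf', fun g hg => le_trans hf'opt (hopt g hg), hl1, ?_⟩
  intro e
  calc |(f e : ℝ) - (f' e : ℝ)| ≤ ∑ e', |(f e' : ℝ) - (f' e' : ℝ)| :=
        Finset.single_le_sum (f := fun e' => |(f e' : ℝ) - (f' e' : ℝ)|)
          (fun e' _ => abs_nonneg _) (Finset.mem_univ e)
    _ ≤ μ * n ^ 2 := hl1
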